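/- Assume the gap condition (H1). Then the following are equivalent: (i) the gap is uniform, i.e. there exists ν > 0 such that a_θ[w] ≥ ν ‖w‖_θ² for all w ∈ W_θ and all θ ∈ Θ; (ii) the subspaces V_θ are Lipschitz continuous in θ, i.e. there exists L_V > 0 such that for all θ₁, θ₂ ∈ Θ and every v₁ ∈ V_{θ₁} one has inf over v₂ ∈ V_{θ₂} of ‖v₁ − v₂‖_{θ₂} ≤ L_V |θ₁ − θ₂| ‖v₁‖_{θ₁}. -/

import Mathlib

noncomputable section

open scoped Classical

/-- An abstract family of non-negative bounded sesquilinear forms `a θ`, `b θ`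
(linear in the first argument, conjugate-linear in the second) on a complex Hilbert
space `H`, parametrised by `θ` in a compact subset `Θ` of `ℝⁿ`, such that
`(·,·)_θ := a θ + b θ` is a family of inner products whose norms are equivalent
to the norm of `H`. -/
structure FormFamily (n : ℕ) (H : Type*) [NormedAddCommGroup H] [InnerProductSpace ℂ H]
    [CompleteSpace H] where
  Θ : Set (EuclideanSpace ℝ (Fin n))
  compactΘ : IsCompact Θ
  a : EuclideanSpace ℝ (Fin n) → H → H → ℂ
  b : EuclideanSpace ℝ (Fin n) → H → H → ℂ
  a_addL : ∀ θ ∈ Θ, ∀ u v w : H, a θ (u + v) w = a θ u w + a θ v w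
  a_smulL : ∀ θ ∈ Θ, ∀ (c : ℂ) (u w : H), a θ (c • u) w = c * a θ u w
  a_addR : ∀ θ ∈ Θ, ∀ u v w : H, a θ u (v + w) = a θ u v + a θ u w
  a_smulR : ∀ θ ∈ Θ, ∀ (c : ℂ) (u w : H), a θ u (c • w) = starRingEnd ℂ c * a θ u w
  a_nonneg : ∀ θ ∈ Θ, ∀ u : H, 0 ≤ (a θ u u).re
  a_im : ∀ θ ∈ Θ, ∀ u : H, (a θ u u).im = 0
  a_bdd : ∀ θ ∈ Θ, ∃ C : ℝ, ∀ u w : H, ‖a θ u w‖ ≤ C * ‖u‖ * ‖w‖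
  b_addL : ∀ θ ∈ Θ, ∀ u v w : H, b θ (u + v) w = b θ u w + b θ v w
  b_smulL : ∀ θ ∈ Θ, ∀ (c : ℂ) (u w : H), b θ (c • u) w = c * b θ u w
  b_addR : ∀ θ ∈ Θ, ∀ u v w : H, b θ u (v + w) = b θ u v + b θ u w
  b_smulR : ∀ θ ∈ Θ, ∀ (c : ℂ) (u w : H), b θ u (c • w) = starRingEnd ℂ c * b θ u w
  b_nonneg : ∀ θ ∈ Θ, ∀ u : H, 0 ≤ (b θ u u).re
  b_im : ∀ θ ∈ Θ, ∀ u : H, (b θ u u).im = 0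
  b_bdd : ∀ θ ∈ Θ, ∃ C : ℝ, ∀ u w : H, ‖b θ u w‖ ≤ C * ‖u‖ * ‖w‖
  equivNorm : ∀ θ ∈ Θ, ∃ c₁ c₂ : ℝ, 0 < c₁ ∧ ∀ u : H,
    c₁ * ‖u‖ ^ 2 ≤ (a θ u u).re + (b θ u u).re ∧
      (a θ u u).re + (b θ u u).re ≤ c₂ * ‖u‖ ^ 2

namespace FormFamily

variable {n : ℕ} {H : Type*} [NormedAddCommGroup H] [InnerProductSpace ℂ H] [CompleteSpace H]

/-- The inner product `(u, w)_θ := a θ u w + b θ u w`. -/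
def ip (S : FormFamily n H) (θ : EuclideanSpace ℝ (Fin n)) (u w : H) : ℂ :=
  S.a θ u w + S.b θ u w

/-- The squared `θ`-norm `‖u‖_θ ^ 2 = (u, u)_θ`. -/
def nsq (S : FormFamily n H) (θ : EuclideanSpace ℝ (Fin n)) (u : H) : ℝ :=
  (S.ip θ u u).re

/-- The `θ`-norm `‖u‖_θ`. -/
def nrm (S : FormFamily n H) (θ : EuclideanSpace ℝ (Fin n)) (u : H) : ℝ :=
  Real.sqrt (S.nsq θ u)

/-- The degeneracy subspace `V_θ = {v : a_θ[v] = 0}`. -/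
def V (S : FormFamily n H) (θ : EuclideanSpace ℝ (Fin n)) : Set H :=
  {v : H | S.a θ v v = 0}

/-- `W_θ`, the orthogonal complement of `V_θ` in `H` with respect to `(·,·)_θ`. -/
def W (S : FormFamily n H) (θ : EuclideanSpace ℝ (Fin n)) : Set H :=
  {w : H | ∀ v ∈ S.V θ, S.ip θ w v = 0}

end FormFamily

/-- `f : H → ℂ` is a bounded conjugate-linear functional. -/
def IsBddConjLinear {H : Type*} [NormedAddCommGroup H] [InnerProductSpace ℂ H]
    (f : H → ℂ) : Prop :=
  (∀ u v : H, f (u + v) = f u + f v) ∧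
    (∀ (c : ℂ) (u : H), f (c • u) = starRingEnd ℂ c * f u) ∧
    ∃ C : ℝ, ∀ u : H, ‖f u‖ ≤ C * ‖u‖

/-- The homogenised form `a^h_θ(v,vt) = a''₀(v,vt)θ·θ - a₀(N_θ v, N_θ vt)`. -/
def ahom {n : ℕ} {H : Type*} [NormedAddCommGroup H] [InnerProductSpace ℂ H] [CompleteSpace H]
    (S : FormFamily n H) (a'' : H → H → Fin n → Fin n → ℂ)
    (N : EuclideanSpace ℝ (Fin n) → H → H) (θ : EuclideanSpace ℝ (Fin n)) (v vt : H) : ℂ :=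
  (∑ j, ∑ k, a'' v vt j k * (θ j : ℂ) * (θ k : ℂ)) - S.a 0 (N θ v) (N θ vt)


section Helpers

/-- A non-negative sesquilinear form (linear in the first argument). -/
structure Sesq (H : Type*) [AddCommGroup H] [Module ℂ H] where
  s : H → H → ℂ
  addL : ∀ u v w, s (u + v) w = s u w + s v w
  smulL : ∀ (c : ℂ) (u w), s (c • u) w = c * s u w
  addR : ∀ u v w, s u (v + w) = s u v + s u w
  smulR : ∀ (c : ℂ) (u w), s u (c • w) = starRingEnd ℂ c * s u w
  nonneg : ∀ u, 0 ≤ (s u u).re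
  im0 : ∀ u, (s u u).im = 0

namespace Sesq

variable {H : Type*} [AddCommGroup H] [Module ℂ H] (T : Sesq H)

lemma zeroL (w : H) : T.s 0 w = 0 := by
  have := T.smulL 0 0 w; simpa using this

lemma zeroR (u : H) : T.s u 0 = 0 := by
  have := T.smulR 0 u 0; simpa using this

lemma negL (u w : H) : T.s (-u) w = - T.s u w := by
  have := T.smulL (-1) u w; simpa using this

lemma negR (u w : H) : T.s u (-w) = - T.s u w := by
  have := T.smulR (-1) u w; simpa using this

lemma subL (u v w : H) : T.s (u - v) w = T.s u w - T.s v w := by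
  rw [sub_eq_add_neg, T.addL, T.negL, sub_eq_add_neg]

lemma subR (u v w : H) : T.s u (v - w) = T.s u v - T.s u w := by
  rw [sub_eq_add_neg, T.addR, T.negR, sub_eq_add_neg]

lemma herm (u w : H) : T.s w u = starRingEnd ℂ (T.s u w) := by
  have h1 : (T.s (u + w) (u + w)).im = 0 := T.im0 _
  have h2 : (T.s (u + Complex.I • w) (u + Complex.I • w)).im = 0 := T.im0 _
  simp only [T.addL, T.addR, T.smulL, T.smulR, Complex.conj_I] at h1 h2
  have hu := T.im0 u
  have hw := T.im0 w
  apply Complex.ext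
  · simp only [Complex.add_im, Complex.mul_im, Complex.mul_re, Complex.neg_re, Complex.I_re,
      Complex.neg_im, Complex.I_im, hu, hw] at h1 h2
    simp only [Complex.conj_re]
    nlinarith [h1, h2]
  · simp only [Complex.add_im, Complex.mul_im, Complex.mul_re, Complex.neg_re, Complex.I_re,
      Complex.neg_im, Complex.I_im, hu, hw] at h1 h2
    simp only [Complex.conj_im]
    nlinarith [h1, h2]

lemma cs (u w : H) : ‖T.s u w‖ ^ 2 ≤ (T.s u u).re * (T.s w w).re := by
  let core : PreInnerProductSpace.Core ℂ H :=
    { inner := fun x y => T.s y x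
      conj_inner_symm := fun x y => (T.herm x y).symm
      re_inner_nonneg := fun x => T.nonneg x
      add_left := fun x y z => T.addR z x y
      smul_left := fun x y r => T.smulR r y x }
  have h := InnerProductSpace.Core.inner_mul_inner_self_le (c := core) u w
  have he : ‖T.s w u‖ = ‖T.s u w‖ := by rw [T.herm u w]; exact RCLike.norm_conj _
  simp only [RCLike.re_to_complex] at h
  calc ‖T.s u w‖ ^ 2 = ‖T.s w u‖ * ‖T.s u w‖ := by rw [he, sq]
  _ ≤ (T.s u u).re * (T.s w w).re := h

lemma nullL (u : H) (hu : T.s u u = 0) (w : H) : T.s u w = 0 := by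
  have h := T.cs u w
  rw [hu] at h
  simp only [Complex.zero_re, zero_mul] at h
  have := sq_nonneg ‖T.s u w‖
  have h0 : ‖T.s u w‖ = 0 := by nlinarith [norm_nonneg (T.s u w)]
  exact norm_eq_zero.mp h0

lemma nullR (u : H) (hu : T.s u u = 0) (w : H) : T.s w u = 0 := by
  rw [T.herm u w, T.nullL u hu w, map_zero]

end Sesq

namespace Sesq

variable {H : Type*} [AddCommGroup H] [Module ℂ H] (T : Sesq H)

lemma norm_le (u w : H) :
    ‖T.s u w‖ ≤ Real.sqrt ((T.s u u).re) * Real.sqrt ((T.s w w).re) := by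
  have h1 := T.cs u w
  calc ‖T.s u w‖ = Real.sqrt (‖T.s u w‖ ^ 2) := (Real.sqrt_sq (norm_nonneg _)).symm
    _ ≤ Real.sqrt ((T.s u u).re * (T.s w w).re) := Real.sqrt_le_sqrt h1
    _ = _ := Real.sqrt_mul (T.nonneg u) _

lemma re_le (u w : H) :
    (T.s u w).re ≤ Real.sqrt ((T.s u u).re) * Real.sqrt ((T.s w w).re) :=
  le_trans (Complex.re_le_norm _) (T.norm_le u w)

lemma sqrt_triangle (u v : H) :
    Real.sqrt ((T.s (u + v) (u + v)).re) ≤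
      Real.sqrt ((T.s u u).re) + Real.sqrt ((T.s v v).re) := by
  have hexp : T.s (u + v) (u + v) = T.s u u + T.s v v + (T.s u v + T.s v u) := by
    rw [T.addL, T.addR, T.addR]; ring
  have hre : (T.s v u).re = (T.s u v).re := by rw [T.herm u v, Complex.conj_re]
  have hcs := T.re_le u v
  have hb : (T.s (u + v) (u + v)).re ≤
      (Real.sqrt ((T.s u u).re) + Real.sqrt ((T.s v v).re)) ^ 2 := by
    rw [hexp]
    simp only [Complex.add_re]
    nlinarith [Real.sq_sqrt (T.nonneg u), Real.sq_sqrt (T.nonneg v)]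
  calc Real.sqrt ((T.s (u + v) (u + v)).re)
      ≤ Real.sqrt ((Real.sqrt ((T.s u u).re) + Real.sqrt ((T.s v v).re)) ^ 2) :=
        Real.sqrt_le_sqrt hb
    _ = _ := Real.sqrt_sq (by positivity)

end Sesq

namespace FormFamily

variable {n : ℕ} {H : Type*} [NormedAddCommGroup H] [InnerProductSpace ℂ H] [CompleteSpace H]
  (S : FormFamily n H) {θ : EuclideanSpace ℝ (Fin n)}

/-- The form `a θ` as a `Sesq`. -/
def sesqA (hθ : θ ∈ S.Θ) : Sesq H :=
  ⟨S.a θ, S.a_addL θ hθ, S.a_smulL θ hθ, S.a_addR θ hθ, S.a_smulR θ hθ,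
    S.a_nonneg θ hθ, S.a_im θ hθ⟩

/-- The form `ip θ` as a `Sesq`. -/
def sesqIp (hθ : θ ∈ S.Θ) : Sesq H where
  s := S.ip θ
  addL u v w := by simp only [ip, S.a_addL θ hθ, S.b_addL θ hθ]; ring
  smulL c u w := by simp only [ip, S.a_smulL θ hθ, S.b_smulL θ hθ]; ring
  addR u v w := by simp only [ip, S.a_addR θ hθ, S.b_addR θ hθ]; ring
  smulR c u w := by simp only [ip, S.a_smulR θ hθ, S.b_smulR θ hθ]; ring
  nonneg u := by
    simpa only [ip, Complex.add_re] using add_nonneg (S.a_nonneg θ hθ u) (S.b_nonneg θ hθ u)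
  im0 u := by simp only [ip, Complex.add_im, S.a_im θ hθ, S.b_im θ hθ, add_zero]

lemma nsq_eq (u : H) : S.nsq θ u = (S.a θ u u).re + (S.b θ u u).re := Complex.add_re _ _

lemma nsq_nonneg (hθ : θ ∈ S.Θ) (u : H) : 0 ≤ S.nsq θ u := (S.sesqIp hθ).nonneg u

lemma nrm_nonneg (θ' : EuclideanSpace ℝ (Fin n)) (u : H) : 0 ≤ S.nrm θ' u := Real.sqrt_nonneg _

lemma nrm_sq (hθ : θ ∈ S.Θ) (u : H) : S.nrm θ u ^ 2 = S.nsq θ u :=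
  Real.sq_sqrt (S.nsq_nonneg hθ u)

lemma ip_cs (hθ : θ ∈ S.Θ) (u w : H) : ‖S.ip θ u w‖ ≤ S.nrm θ u * S.nrm θ w :=
  (S.sesqIp hθ).norm_le u w

lemma ip_re_le (hθ : θ ∈ S.Θ) (u w : H) : (S.ip θ u w).re ≤ S.nrm θ u * S.nrm θ w :=
  (S.sesqIp hθ).re_le u w

lemma nrm_triangle (hθ : θ ∈ S.Θ) (u v : H) :
    S.nrm θ (u + v) ≤ S.nrm θ u + S.nrm θ v :=
  (S.sesqIp hθ).sqrt_triangle u v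

lemma a_nullL (hθ : θ ∈ S.Θ) {v : H} (hv : v ∈ S.V θ) (w : H) : S.a θ v w = 0 :=
  (S.sesqA hθ).nullL v hv w

lemma a_nullR (hθ : θ ∈ S.Θ) {v : H} (hv : v ∈ S.V θ) (w : H) : S.a θ w v = 0 :=
  (S.sesqA hθ).nullR v hv w

lemma a_subL (hθ : θ ∈ S.Θ) (u v w : H) : S.a θ (u - v) w = S.a θ u w - S.a θ v w :=
  (S.sesqA hθ).subL u v w

lemma a_subR (hθ : θ ∈ S.Θ) (u v w : H) : S.a θ u (v - w) = S.a θ u v - S.a θ u w :=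
  (S.sesqA hθ).subR u v w

lemma ip_subR (hθ : θ ∈ S.Θ) (u v w : H) : S.ip θ u (v - w) = S.ip θ u v - S.ip θ u w :=
  (S.sesqIp hθ).subR u v w

lemma ip_addL (hθ : θ ∈ S.Θ) (u v w : H) : S.ip θ (u + v) w = S.ip θ u w + S.ip θ v w :=
  (S.sesqIp hθ).addL u v w

lemma ip_addR (hθ : θ ∈ S.Θ) (u v w : H) : S.ip θ u (v + w) = S.ip θ u v + S.ip θ u w :=
  (S.sesqIp hθ).addR u v w

lemma ip_herm (hθ : θ ∈ S.Θ) (u w : H) : S.ip θ w u = starRingEnd ℂ (S.ip θ u w) :=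
  (S.sesqIp hθ).herm u w

lemma zero_mem_V (hθ : θ ∈ S.Θ) : (0 : H) ∈ S.V θ := (S.sesqA hθ).zeroL 0

end FormFamily

end Helpers

/-- Type synonym of `H` carrying the `θ`-inner product structure. -/
def Syn {n : ℕ} {H : Type*} [NormedAddCommGroup H] [InnerProductSpace ℂ H] [CompleteSpace H]
    (_S : FormFamily n H) (_θ : EuclideanSpace ℝ (Fin n)) : Type _ := H

theorem FormFamily.exists_decomp {n : ℕ} {H : Type*} [NormedAddCommGroup H]
    [InnerProductSpace ℂ H] [CompleteSpace H] (S : FormFamily n H)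
    {θ : EuclideanSpace ℝ (Fin n)} (hθ : θ ∈ S.Θ) (u : H) :
    ∃ v ∈ S.V θ, u - v ∈ S.W θ := by
  classical
  obtain ⟨c₁, c₂, hc₁, hcc⟩ := S.equivNorm θ hθ
  obtain ⟨Ca, hCa⟩ := S.a_bdd θ hθ
  letI : AddCommGroup (Syn S θ) := inferInstanceAs (AddCommGroup H)
  letI : Module ℂ (Syn S θ) := inferInstanceAs (Module ℂ H)
  letI core : InnerProductSpace.Core ℂ (Syn S θ) :=
    { inner := fun x y => S.ip θ y x
      conj_inner_symm := fun x y => ((S.sesqIp hθ).herm x y).symm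
      re_inner_nonneg := fun x => (S.sesqIp hθ).nonneg x
      add_left := fun x y z => (S.sesqIp hθ).addR z x y
      smul_left := fun x y r => (S.sesqIp hθ).smulR r y x
      definite := by
        intro x hx
        have hx0 : S.ip θ x x = 0 := hx
        suffices h : ∀ y : H, S.ip θ y y = 0 → y = 0 from h x hx0
        intro y hy
        have hy' : S.nsq θ y = 0 := by
          show (S.ip θ y y).re = 0
          rw [hy]; rfl
        have h1 := (hcc y).1
        rw [← S.nsq_eq] at h1
        have hsq : ‖y‖ ^ 2 ≤ 0 := by nlinarith
        have h0 : ‖y‖ ^ 2 = 0 := le_antisymm hsq (sq_nonneg _)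
        exact norm_eq_zero.mp (sq_eq_zero_iff.mp h0) }
  letI : NormedAddCommGroup (Syn S θ) := core.toNormedAddCommGroup
  letI : InnerProductSpace ℂ (Syn S θ) := InnerProductSpace.ofCore core.toCore
  have hnorm : ∀ x : Syn S θ, ‖x‖ = S.nrm θ x := fun x => rfl
  have hup : ∀ x : H, S.nrm θ x ≤ Real.sqrt (max c₂ 0) * ‖x‖ := by
    intro x
    have h1 : S.nsq θ x ≤ max c₂ 0 * ‖x‖ ^ 2 := by
      have h2 := (hcc x).2
      rw [← S.nsq_eq] at h2
      nlinarith [le_max_left c₂ 0, sq_nonneg ‖x‖]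
    calc S.nrm θ x = Real.sqrt (S.nsq θ x) := rfl
      _ ≤ Real.sqrt (max c₂ 0 * ‖x‖ ^ 2) := Real.sqrt_le_sqrt h1
      _ = Real.sqrt (max c₂ 0) * ‖x‖ := by
          rw [Real.sqrt_mul (le_max_right c₂ 0), Real.sqrt_sq (norm_nonneg x)]
  have hlow : ∀ x : H, ‖x‖ ≤ (Real.sqrt c₁)⁻¹ * S.nrm θ x := by
    intro x
    have h1 : c₁ * ‖x‖ ^ 2 ≤ S.nsq θ x := by rw [S.nsq_eq]; exact (hcc x).1
    have h2 : Real.sqrt (c₁ * ‖x‖ ^ 2) ≤ S.nrm θ x := Real.sqrt_le_sqrt h1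
    rw [Real.sqrt_mul hc₁.le, Real.sqrt_sq (norm_nonneg x)] at h2
    have hsc : 0 < Real.sqrt c₁ := Real.sqrt_pos.mpr hc₁
    rw [inv_mul_eq_div, le_div_iff₀ hsc]
    linarith [h2]
  let eqv : H ≃ Syn S θ := ⟨fun x => x, fun x => x, fun _ => rfl, fun _ => rfl⟩
  have hf : UniformContinuous eqv := by
    refine LipschitzWith.uniformContinuous
      (LipschitzWith.of_dist_le_mul (K := Real.toNNReal (Real.sqrt (max c₂ 0))) fun x y => ?_)
    have h1 : dist (eqv x) (eqv y) = S.nrm θ (x - y) := by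
      rw [dist_eq_norm]
      exact hnorm _
    rw [h1, Real.coe_toNNReal _ (Real.sqrt_nonneg _), dist_eq_norm]
    exact hup (x - y)
  have hg : UniformContinuous eqv.symm := by
    refine LipschitzWith.uniformContinuous
      (LipschitzWith.of_dist_le_mul (K := Real.toNNReal ((Real.sqrt c₁)⁻¹)) fun x y => ?_)
    have h1 : dist (eqv.symm x) (eqv.symm y) = ‖(show H from x) - (show H from y)‖ :=
      dist_eq_norm _ _
    have h2 : dist x y = S.nrm θ ((show H from x) - (show H from y)) := by
      rw [dist_eq_norm]
      exact hnorm _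
    rw [h1, h2, Real.coe_toNNReal _ (inv_nonneg.mpr (Real.sqrt_nonneg _))]
    exact hlow _
  haveI : CompleteSpace (Syn S θ) :=
    (completeSpace_congr (eqv.isUniformEmbedding hf hg)).mp ‹CompleteSpace H›
  let Vsub : Submodule ℂ (Syn S θ) :=
    { carrier := S.V θ
      add_mem' := by
        have key : ∀ x y : H, x ∈ S.V θ → y ∈ S.V θ → S.a θ (x + y) (x + y) = 0 := by
          intro x y hx hy
          have hx' : S.a θ x x = 0 := hx
          have hy' : S.a θ y y = 0 := hy
          rw [S.a_addL θ hθ, S.a_addR θ hθ, S.a_addR θ hθ, hx', hy',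
            S.a_nullL hθ hx y, S.a_nullL hθ hy x]
          ring
        intro x y hx hy
        exact key x y hx hy
      zero_mem' := S.zero_mem_V hθ
      smul_mem' := by
        have key : ∀ (c : ℂ) (x : H), x ∈ S.V θ → S.a θ (c • x) (c • x) = 0 := by
          intro c x hx
          have hx' : S.a θ x x = 0 := hx
          rw [S.a_smulL θ hθ, S.a_smulR θ hθ, hx']
          ring
        intro c x hx
        exact key c x hx }
  have hVset : (Vsub : Set (Syn S θ)) = ⋂ w : H, {v : Syn S θ | S.a θ v w = 0} := by
    ext x
    simp only [Set.mem_iInter, Set.mem_setOf_eq]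
    exact ⟨fun hx w => S.a_nullL hθ hx w, fun hx => hx x⟩
  have hVclosed : IsClosed (Vsub : Set (Syn S θ)) := by
    rw [hVset]
    refine isClosed_iInter fun w => ?_
    have hcont : Continuous fun v : Syn S θ => S.a θ v w := by
      refine AddMonoidHomClass.continuous_of_bound
        (f := ({ toFun := fun v : Syn S θ => S.a θ v w
                 map_add' := fun x y => S.a_addL θ hθ x y w
                 map_smul' := fun c x => by simp only [RingHom.id_apply, smul_eq_mul]; exact S.a_smulL θ hθ c x w } : Syn S θ →ₗ[ℂ] ℂ))
        (max Ca 0 * ‖w‖ * (Real.sqrt c₁)⁻¹) fun x => ?_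
      rw [hnorm]
      have h1 : ‖S.a θ x w‖ ≤ Ca * ‖(show H from x)‖ * ‖w‖ := hCa x w
      have h2 := hlow (show H from x)
      have h3 : (0 : ℝ) ≤ (Real.sqrt c₁)⁻¹ := inv_nonneg.mpr (Real.sqrt_nonneg c₁)
      calc ‖S.a θ x w‖ ≤ Ca * ‖(show H from x)‖ * ‖w‖ := h1
        _ ≤ max Ca 0 * ‖(show H from x)‖ * ‖w‖ :=
            mul_le_mul_of_nonneg_right
              (mul_le_mul_of_nonneg_right (le_max_left Ca 0) (norm_nonneg _)) (norm_nonneg _)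
        _ = max Ca 0 * ‖w‖ * ‖(show H from x)‖ := by ring
        _ ≤ max Ca 0 * ‖w‖ * ((Real.sqrt c₁)⁻¹ * S.nrm θ x) := by
            have hnn : (0 : ℝ) ≤ max Ca 0 * ‖w‖ :=
              mul_nonneg (le_max_right Ca 0) (norm_nonneg w)
            exact mul_le_mul_of_nonneg_left h2 hnn
        _ = max Ca 0 * ‖w‖ * (Real.sqrt c₁)⁻¹ * S.nrm θ x := by ring
    exact isClosed_eq hcont continuous_const
  haveI : CompleteSpace Vsub := hVclosed.completeSpace_coe
  obtain ⟨v, hvV, hperp⟩ := Submodule.HasOrthogonalProjection.exists_orthogonal (K := Vsub) u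
  refine ⟨v, hvV, fun x hx => ?_⟩
  exact (Submodule.mem_orthogonal Vsub ((show Syn S θ from u) - v)).mp hperp x hx

set_option maxHeartbeats 1600000 in
theorem statement1
    {n : ℕ} (hn : 0 < n) {H : Type*} [NormedAddCommGroup H] [InnerProductSpace ℂ H]
    [CompleteSpace H] (S : FormFamily n H)
    (K : ℝ) (hK0 : 0 < K)
    (hK : ∀ θ₁ ∈ S.Θ, ∀ θ₂ ∈ S.Θ, ∀ u : H, S.nrm θ₁ u ≤ K * S.nrm θ₂ u)
    (La : ℝ) (hLa0 : 0 < La)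
    (hLa : ∀ θ₁ ∈ S.Θ, ∀ θ₂ ∈ S.Θ, ∀ u w : H,
      ‖S.a θ₁ u w - S.a θ₂ u w‖ ≤ La * ‖θ₁ - θ₂‖ * S.nrm θ₁ u * S.nrm θ₁ w)
    (hH1 : ∀ θ ∈ S.Θ, ∃ νθ : ℝ, 0 < νθ ∧ ∀ w ∈ S.W θ, νθ * S.nsq θ w ≤ (S.a θ w w).re)
 :
    (∃ ν : ℝ, 0 < ν ∧ ∀ θ ∈ S.Θ, ∀ w ∈ S.W θ, ν * S.nsq θ w ≤ (S.a θ w w).re) ↔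
      ∃ LV : ℝ, 0 < LV ∧ ∀ θ₁ ∈ S.Θ, ∀ θ₂ ∈ S.Θ, ∀ v₁ ∈ S.V θ₁,
        sInf ((fun v₂ => S.nrm θ₂ (v₁ - v₂)) '' S.V θ₂) ≤ LV * ‖θ₁ - θ₂‖ * S.nrm θ₁ v₁ := by
  have reLe : ∀ z : ℂ, z.re ≤ ‖z‖ := fun z =>
    Complex.re_le_norm z
  constructor
  · -- uniform gap ⇒ Lipschitz continuity of V
    rintro ⟨ν, hν, hgap⟩
    refine ⟨K * La / ν, by positivity, ?_⟩
    intro θ₁ hθ₁ θ₂ hθ₂ v₁ hv₁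
    obtain ⟨v₂, hv₂, hwW⟩ := S.exists_decomp hθ₂ v₁
    have hbdd : BddBelow ((fun v₂ => S.nrm θ₂ (v₁ - v₂)) '' S.V θ₂) := by
      refine ⟨0, ?_⟩
      rintro x ⟨v', -, rfl⟩
      exact S.nrm_nonneg _ _
    have hsInf : sInf ((fun v₂ => S.nrm θ₂ (v₁ - v₂)) '' S.V θ₂) ≤ S.nrm θ₂ (v₁ - v₂) :=
      csInf_le hbdd ⟨v₂, hv₂, rfl⟩
    have hA : S.a θ₂ (v₁ - v₂) (v₁ - v₂) = S.a θ₂ v₁ (v₁ - v₂) - S.a θ₁ v₁ (v₁ - v₂) := by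
      rw [S.a_subL hθ₂, S.a_nullL hθ₂ hv₂, S.a_nullL hθ₁ hv₁]
    have hAbound : ‖S.a θ₂ (v₁ - v₂) (v₁ - v₂)‖ ≤
        La * ‖θ₁ - θ₂‖ * (K * S.nrm θ₁ v₁) * S.nrm θ₂ (v₁ - v₂) := by
      rw [hA]
      have h1 := hLa θ₂ hθ₂ θ₁ hθ₁ v₁ (v₁ - v₂)
      have h2 : S.nrm θ₂ v₁ ≤ K * S.nrm θ₁ v₁ := hK θ₂ hθ₂ θ₁ hθ₁ v₁
      have h3 : ‖θ₂ - θ₁‖ = ‖θ₁ - θ₂‖ := norm_sub_rev _ _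
      have h4 : La * ‖θ₂ - θ₁‖ * S.nrm θ₂ v₁ * S.nrm θ₂ (v₁ - v₂) ≤
          La * ‖θ₁ - θ₂‖ * (K * S.nrm θ₁ v₁) * S.nrm θ₂ (v₁ - v₂) := by
        rw [h3]
        have h5 : La * ‖θ₁ - θ₂‖ * S.nrm θ₂ v₁ ≤ La * ‖θ₁ - θ₂‖ * (K * S.nrm θ₁ v₁) :=
          mul_le_mul_of_nonneg_left h2 (by positivity)
        exact mul_le_mul_of_nonneg_right h5 (S.nrm_nonneg _ _)
      exact h1.trans h4
    have hgap2 := hgap θ₂ hθ₂ (v₁ - v₂) hwW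
    have key : ν * S.nrm θ₂ (v₁ - v₂) ^ 2 ≤
        La * ‖θ₁ - θ₂‖ * (K * S.nrm θ₁ v₁) * S.nrm θ₂ (v₁ - v₂) := by
      rw [S.nrm_sq hθ₂]
      exact hgap2.trans ((reLe _).trans hAbound)
    rcases eq_or_lt_of_le (S.nrm_nonneg θ₂ (v₁ - v₂)) with hm | hm
    · refine hsInf.trans ?_
      rw [← hm]
      have hn1 : (0:ℝ) ≤ K * La / ν * ‖θ₁ - θ₂‖ := by positivity
      exact mul_nonneg hn1 (S.nrm_nonneg θ₁ v₁)
    · have h6 : ν * S.nrm θ₂ (v₁ - v₂) ≤ La * ‖θ₁ - θ₂‖ * (K * S.nrm θ₁ v₁) := by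
        refine le_of_mul_le_mul_right ?_ hm
        nlinarith [key]
      refine hsInf.trans ?_
      rw [div_mul_eq_mul_div, div_mul_eq_mul_div, le_div_iff₀ hν]
      nlinarith [h6]
  · -- Lipschitz continuity of V ⇒ uniform gap
    rintro ⟨LV, hLV, hlip⟩
    choose ν₀ hν₀ using hH1
    have claim : ∀ θ₀, ∀ h₀ : θ₀ ∈ S.Θ, ∀ θ, ∀ hθ : θ ∈ S.Θ,
        16 * La * K ^ 4 * ‖θ - θ₀‖ ≤ ν₀ θ₀ h₀ → 4 * (LV * K) * ‖θ - θ₀‖ ≤ 1 →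
        ∀ w ∈ S.W θ, ν₀ θ₀ h₀ * S.nsq θ w ≤ 16 * K ^ 2 * (S.a θ w w).re := by
      intro θ₀ h₀ θ hθ hε1 hε2 w hw
      have hε0 : (0 : ℝ) ≤ ‖θ - θ₀‖ := norm_nonneg _
      have hm0 : 0 ≤ S.nrm θ w := S.nrm_nonneg _ _
      have hmsq : S.nrm θ w ^ 2 = S.nsq θ w := S.nrm_sq hθ w
      have hA0 : 0 ≤ (S.a θ w w).re := S.a_nonneg θ hθ w
      have hνpos : 0 < ν₀ θ₀ h₀ := (hν₀ θ₀ h₀).1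
      rcases eq_or_lt_of_le hm0 with hm | hm
      · rw [← hmsq, ← hm]
        nlinarith [hA0, hK0, sq_nonneg K]
      · -- step 1 : gap transfer bound for a θ₀
        have hw0 : S.nrm θ₀ w ≤ K * S.nrm θ w := hK θ₀ h₀ θ hθ w
        have hd := hLa θ₀ h₀ θ hθ w w
        have h1 : (S.a θ₀ w w).re ≤ (S.a θ w w).re + La * ‖θ - θ₀‖ * (K * S.nrm θ w) ^ 2 := by
          have e3 : (S.a θ₀ w w).re - (S.a θ w w).re ≤ ‖S.a θ₀ w w - S.a θ w w‖ := by
            calc (S.a θ₀ w w).re - (S.a θ w w).re = (S.a θ₀ w w - S.a θ w w).re :=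
                  (Complex.sub_re _ _).symm
              _ ≤ ‖S.a θ₀ w w - S.a θ w w‖ := reLe _
          have e4 : La * ‖θ₀ - θ‖ * S.nrm θ₀ w * S.nrm θ₀ w ≤
              La * ‖θ - θ₀‖ * (K * S.nrm θ w) ^ 2 := by
            rw [norm_sub_rev θ₀ θ]
            nlinarith [mul_le_mul hw0 hw0 (S.nrm_nonneg θ₀ w) (mul_nonneg hK0.le hm0),
              mul_nonneg hLa0.le hε0]
          linarith [hd, e3, e4]
        -- step 2 : decompose w at θ₀
        obtain ⟨v, hvV, huW⟩ := S.exists_decomp h₀ w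
        have huA : S.a θ₀ (w - v) (w - v) = S.a θ₀ w w := by
          rw [S.a_subL h₀, S.a_subR h₀, S.a_subR h₀, S.a_nullL h₀ hvV w, S.a_nullL h₀ hvV v, S.a_nullR h₀ hvV w]
          ring
        have h2 : ν₀ θ₀ h₀ * S.nrm θ₀ (w - v) ^ 2 ≤ (S.a θ₀ w w).re := by
          have h2' := (hν₀ θ₀ h₀).2 (w - v) huW
          rw [huA] at h2'
          rw [S.nrm_sq h₀]
          exact h2'
        -- step 3 : Pythagoras, nrm θ₀ v ≤ K * nrm θ w
        have hexp : S.ip θ₀ w w = S.ip θ₀ v v + S.ip θ₀ (w - v) (w - v) := by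
          have hwv : v + (w - v) = w := by abel
          calc S.ip θ₀ w w = S.ip θ₀ (v + (w - v)) (v + (w - v)) := by rw [hwv]
            _ = S.ip θ₀ v (v + (w - v)) + S.ip θ₀ (w - v) (v + (w - v)) := S.ip_addL h₀ _ _ _
            _ = S.ip θ₀ v v + S.ip θ₀ v (w - v) +
                (S.ip θ₀ (w - v) v + S.ip θ₀ (w - v) (w - v)) := by
                rw [S.ip_addR h₀, S.ip_addR h₀]
            _ = S.ip θ₀ v v + S.ip θ₀ (w - v) (w - v) := by
                rw [S.ip_herm h₀ (w - v) v, huW v hvV, map_zero]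
                ring
        have hnsqsum : S.nsq θ₀ w = S.nsq θ₀ v + S.nsq θ₀ (w - v) := by
          have := congrArg Complex.re hexp
          simpa [FormFamily.nsq, Complex.add_re] using this
        have hvle : S.nrm θ₀ v ≤ K * S.nrm θ w := by
          have hv1 : S.nsq θ₀ v ≤ (K * S.nrm θ w) ^ 2 := by
            have hw2 : S.nsq θ₀ w ≤ (K * S.nrm θ w) ^ 2 := by
              rw [← S.nrm_sq h₀]
              exact pow_le_pow_left₀ (S.nrm_nonneg _ _) hw0 2
            have := S.nsq_nonneg h₀ (w - v)
            linarith [hnsqsum]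
          calc S.nrm θ₀ v = Real.sqrt (S.nsq θ₀ v) := rfl
            _ ≤ Real.sqrt ((K * S.nrm θ w) ^ 2) := Real.sqrt_le_sqrt hv1
            _ = K * S.nrm θ w := Real.sqrt_sq (mul_nonneg hK0.le hm0)
        -- step 4 : near-infimum element of V θ
        have hne : ((fun v₂ => S.nrm θ (v - v₂)) '' S.V θ).Nonempty :=
          ⟨_, ⟨0, S.zero_mem_V hθ, rfl⟩⟩
        obtain ⟨x, hx, hxlt⟩ := Real.lt_sInf_add_pos hne
          (show (0:ℝ) < S.nrm θ w / 4 by linarith)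
        obtain ⟨vt, hvtV, rfl⟩ := hx
        have h5 := hlip θ₀ h₀ θ hθ v hvV
        have h9 : S.nrm θ (v - vt) ≤ LV * ‖θ - θ₀‖ * (K * S.nrm θ w) + S.nrm θ w / 4 := by
          have h5' : sInf ((fun v₂ => S.nrm θ (v - v₂)) '' S.V θ) ≤
              LV * ‖θ - θ₀‖ * (K * S.nrm θ w) := by
            refine h5.trans ?_
            rw [norm_sub_rev θ₀ θ]
            exact mul_le_mul_of_nonneg_left hvle (by positivity)
          linarith [hxlt]
        -- step 5 : main chain
        have h6 : S.nsq θ w ≤ S.nrm θ w * S.nrm θ (w - vt) := by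
          have e1 : S.ip θ w (w - vt) = S.ip θ w w := by
            rw [S.ip_subR hθ, hw vt hvtV, sub_zero]
          calc S.nsq θ w = (S.ip θ w (w - vt)).re := by rw [e1]; rfl
            _ ≤ ‖S.ip θ w (w - vt)‖ := reLe _
            _ ≤ S.nrm θ w * S.nrm θ (w - vt) := S.ip_cs hθ _ _
        have h7 : S.nrm θ (w - vt) ≤ K * S.nrm θ₀ (w - v) +
            (LV * ‖θ - θ₀‖ * (K * S.nrm θ w) + S.nrm θ w / 4) := by
          have e2 : w - vt = (w - v) + (v - vt) := by abel
          rw [e2]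
          have htr := S.nrm_triangle hθ (w - v) (v - vt)
          have h8 : S.nrm θ (w - v) ≤ K * S.nrm θ₀ (w - v) := hK θ hθ θ₀ h₀ _
          linarith
        have ht0 : 0 ≤ S.nrm θ₀ (w - v) := S.nrm_nonneg _ _
        have h11 : S.nrm θ w ^ 2 ≤ S.nrm θ w * (K * S.nrm θ₀ (w - v) +
            (LV * ‖θ - θ₀‖ * (K * S.nrm θ w) + S.nrm θ w / 4)) := by
          rw [hmsq]
          exact h6.trans (mul_le_mul_of_nonneg_left h7 hm0)
        have s1 : LV * ‖θ - θ₀‖ * (K * S.nrm θ w) ≤ S.nrm θ w / 4 := by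
          nlinarith [mul_le_mul_of_nonneg_right hε2 hm0]
        have s2 : S.nrm θ w / 2 ≤ K * S.nrm θ₀ (w - v) := by
          nlinarith [h11, mul_le_mul_of_nonneg_left s1 hm0]
        have s3 : S.nrm θ w ^ 2 ≤ 4 * K ^ 2 * S.nrm θ₀ (w - v) ^ 2 := by
          nlinarith [mul_le_mul s2 s2 (by linarith) (mul_nonneg hK0.le ht0)]
        have s4 : ν₀ θ₀ h₀ * S.nrm θ w ^ 2 ≤
            4 * K ^ 2 * ((S.a θ w w).re + La * ‖θ - θ₀‖ * (K * S.nrm θ w) ^ 2) := by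
          nlinarith [mul_le_mul_of_nonneg_left s3 hνpos.le,
            mul_le_mul_of_nonneg_left (h2.trans h1) (by positivity : (0:ℝ) ≤ 4 * K ^ 2)]
        rw [← hmsq]
        nlinarith [s4, mul_le_mul_of_nonneg_right hε1 (sq_nonneg (S.nrm θ w)), hA0, sq_nonneg K]
    -- compactness argument
    rcases S.Θ.eq_empty_or_nonempty with hΘ | hΘ
    · refine ⟨1, one_pos, fun θ hθ => ?_⟩
      rw [hΘ] at hθ
      exact absurd hθ (Set.notMem_empty θ)
    · have hδpos : ∀ θ₀ (h : θ₀ ∈ S.Θ),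
          0 < min (ν₀ θ₀ h / (16 * La * K ^ 4)) (1 / (4 * (LV * K))) := by
        intro θ₀ h
        refine lt_min (div_pos (hν₀ θ₀ h).1 (by positivity)) ?_
        have := mul_pos hLV hK0
        have h4 : (0:ℝ) < 4 * (LV * K) := by linarith
        exact div_pos one_pos h4
      obtain ⟨t, ht⟩ := S.compactΘ.elim_finite_subcover
        (fun i : S.Θ => Metric.ball (i : EuclideanSpace ℝ (Fin n))
          (min (ν₀ i i.2 / (16 * La * K ^ 4)) (1 / (4 * (LV * K)))))
        (fun i => Metric.isOpen_ball)
        (fun θ hθ => Set.mem_iUnion.mpr ⟨⟨θ, hθ⟩, Metric.mem_ball_self (hδpos θ hθ)⟩)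
      obtain ⟨i₀, hi₀⟩ : t.Nonempty := by
        obtain ⟨θ, hθ⟩ := hΘ
        obtain ⟨i, hit, -⟩ := Set.mem_iUnion₂.mp (ht hθ)
        exact ⟨i, hit⟩
      refine ⟨t.inf' ⟨i₀, hi₀⟩ (fun i => ν₀ i i.2 / (16 * K ^ 2)), ?_, ?_⟩
      · obtain ⟨i, -, hi⟩ := Finset.exists_mem_eq_inf' ⟨i₀, hi₀⟩
          (fun i : S.Θ => ν₀ i i.2 / (16 * K ^ 2))
        rw [hi]
        exact div_pos (hν₀ i i.2).1 (by positivity)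
      · intro θ hθ w hw
        obtain ⟨i, hit, hθball⟩ := Set.mem_iUnion₂.mp (ht hθ)
        have hdist : ‖θ - (i : EuclideanSpace ℝ (Fin n))‖ <
            min (ν₀ i i.2 / (16 * La * K ^ 4)) (1 / (4 * (LV * K))) := by
          rw [← dist_eq_norm]
          exact Metric.mem_ball.mp hθball
        have hc1 : 16 * La * K ^ 4 * ‖θ - (i : EuclideanSpace ℝ (Fin n))‖ ≤ ν₀ i i.2 := by
          have h := (lt_min_iff.mp hdist).1
          rw [lt_div_iff₀ (by positivity : (0:ℝ) < 16 * La * K ^ 4)] at h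
          linarith
        have hc2 : 4 * (LV * K) * ‖θ - (i : EuclideanSpace ℝ (Fin n))‖ ≤ 1 := by
          have h := (lt_min_iff.mp hdist).2
          have h4 : (0:ℝ) < 4 * (LV * K) := by
            have := mul_pos hLV hK0
            linarith
          rw [lt_div_iff₀ h4] at h
          linarith
        have hcl := claim i i.2 θ hθ hc1 hc2 w hw
        have hle : t.inf' ⟨i₀, hi₀⟩ (fun i => ν₀ i i.2 / (16 * K ^ 2)) ≤
            ν₀ i i.2 / (16 * K ^ 2) := Finset.inf'_le _ hit
        have hnsq := S.nsq_nonneg hθ w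
        calc t.inf' ⟨i₀, hi₀⟩ (fun i => ν₀ i i.2 / (16 * K ^ 2)) * S.nsq θ w
            ≤ ν₀ i i.2 / (16 * K ^ 2) * S.nsq θ w := mul_le_mul_of_nonneg_right hle hnsq
          _ ≤ (S.a θ w w).re := by
              rw [div_mul_eq_mul_div, div_le_iff₀ (by positivity : (0:ℝ) < 16 * K ^ 2)]
              linarith [hcl]
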